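/- Let G be a connected graph on n vertices with spanning tree G̃ whose fundamental cycles O₁,...,O_c are pairwise edge-disjoint, and let Q be the cycle incidence matrix. Then κ(G,G̃) = Tr((I_{n-1}+QᵀQ)⁻¹) = (n-1) - c + Σ_{k=1}^c |O_k|⁻¹; equivalently κ(G,G̃)/(n-1) = 1 - (c/(n-1))(1 - c⁻¹Σ_{k=1}^c |O_k|⁻¹). -/

import Mathlib

open Matrix

/-- A row of a coboundary (incidence) matrix of an oriented graph: exactly one
`+1` (the positive end), one `-1` (the negative end), and zeros elsewhere. -/
def IsEdgeRow {n : ℕ} (r : Fin n → ℝ) : Prop :=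
  ∃ a b : Fin n, a ≠ b ∧ r a = 1 ∧ r b = -1 ∧ ∀ j, j ≠ a → j ≠ b → r j = 0



namespace IsEdgeRow

variable {N : ℕ} {r h : Fin N → ℝ}

lemma values (hr : IsEdgeRow r) (v : Fin N) : r v = 0 ∨ r v = 1 ∨ r v = -1 := by
  obtain ⟨a, b, hab, ha, hb, h0⟩ := hr
  by_cases hva : v = a
  · subst hva; tauto
  by_cases hvb : v = b
  · subst hvb; tauto
  · exact Or.inl (h0 v hva hvb)

lemma sum_eq_zero (hr : IsEdgeRow r) : ∑ v, r v = 0 := by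
  obtain ⟨a, b, hab, ha, hb, h0⟩ := hr
  rw [← Finset.sum_subset (Finset.subset_univ {a, b})
    (by intro x _ hx; simp at hx; exact h0 x hx.1 hx.2)]
  rw [Finset.sum_pair hab, ha, hb]; ring

lemma support_card (hr : IsEdgeRow r) :
    (Finset.univ.filter fun v => r v ≠ 0).card = 2 := by
  obtain ⟨a, b, hab, ha, hb, h0⟩ := hr
  have : (Finset.univ.filter fun v => r v ≠ 0) = {a, b} := by
    ext v
    simp only [Finset.mem_filter, Finset.mem_univ, true_and, Finset.mem_insert,
      Finset.mem_singleton]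
    constructor
    · intro hv; by_contra hc; push_neg at hc; exact hv (h0 v hc.1 hc.2)
    · rintro (rfl | rfl) <;> simp [ha, hb]
  rw [this, Finset.card_pair hab]

lemma smul (hr : IsEdgeRow r) {e : ℝ} (he : e = 1 ∨ e = -1) : IsEdgeRow (e • r) := by
  obtain ⟨a, b, hab, ha, hb, h0⟩ := hr
  rcases he with rfl | rfl
  · exact ⟨a, b, hab, by simp [ha], by simp [hb], fun j hja hjb => by simp [h0 j hja hjb]⟩
  · exact ⟨b, a, hab.symm, by simp [hb], by simp [ha], fun j hjb hja => by
      simp [h0 j hja hjb]⟩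

lemma sub (hr : IsEdgeRow r) (hh : IsEdgeRow h) {v : Fin N} (hv : r v = h v)
    (h0 : r v ≠ 0) : r - h = 0 ∨ IsEdgeRow (r - h) := by
  obtain ⟨a, b, hab, ha, hb, hr0⟩ := hr
  obtain ⟨p, q, hpq, hp, hq, hh0⟩ := hh
  -- v is a shared endpoint with the same sign
  have hcase : (a = p) ∨ (b = q) := by
    by_cases hva : v = a
    · subst hva
      left
      by_contra hne
      by_cases hvp : v = p
      · exact hne hvp
      by_cases hvq : v = q
      · subst hvq; rw [ha, hq] at hv; norm_num at hv
      · rw [hh0 v hvp hvq] at hv; rw [ha] at hv; norm_num at hv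
    by_cases hvb : v = b
    · subst hvb
      right
      by_contra hne
      by_cases hvq : v = q
      · exact hne hvq
      by_cases hvp : v = p
      · subst hvp; rw [hb, hp] at hv; norm_num at hv
      · rw [hh0 v hvp hvq] at hv; rw [hb] at hv; norm_num at hv
    · exact absurd (hr0 v hva hvb) h0
  rcases hcase with rfl | rfl
  · -- shared positive endpoint a = p
    by_cases hbq : b = q
    · subst hbq
      left; funext w
      by_cases hwa : w = a
      · subst hwa; simp [ha, hp]
      by_cases hwb : w = b
      · subst hwb; simp [hb, hq]
      · simp [hr0 w hwa hwb, hh0 w hwa hwb]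
    · right
      refine ⟨q, b, fun hqb => hbq hqb.symm, ?_, ?_, ?_⟩
      · have hqa : q ≠ a := hpq.symm
        simp [Pi.sub_apply, hr0 q hqa (fun hqb => hbq hqb.symm), hq]
      · have hba : b ≠ a := hab.symm
        simp [Pi.sub_apply, hb, hh0 b hba hbq]
      · intro j hjq hjb
        by_cases hja : j = a
        · subst hja; simp [ha, hp]
        · simp [Pi.sub_apply, hr0 j hja hjb, hh0 j hja hjq]
  · -- shared negative endpoint b = q
    by_cases hap : a = p
    · subst hap
      left; funext w
      by_cases hwa : w = a
      · subst hwa; simp [ha, hp]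
      by_cases hwb : w = b
      · subst hwb; simp [hb, hq]
      · simp [hr0 w hwa hwb, hh0 w hwa hwb]
    · right
      refine ⟨a, p, hap, ?_, ?_, ?_⟩
      · have hapq : a ≠ b := hab
        simp [Pi.sub_apply, ha, hh0 a hap hapq]
      · have hpb : p ≠ b := fun hpb => hpq (hpb)
        simp [Pi.sub_apply, hr0 p (fun h => hap h.symm) hpb, hp]
      · intro j hja hjp
        by_cases hjb : j = b
        · subst hjb; simp [hb, hq]
        · simp [Pi.sub_apply, hr0 j hja hjb, hh0 j hjp hjb]

end IsEdgeRow

section Key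
variable {ι : Type*} [DecidableEq ι] {N : ℕ}

/-- Any linearly independent family of edge rows whose span contains an
edge row (or zero) expresses it with coefficients in `{0, 1, -1}`. -/
lemma key_edge_coeffs :
    ∀ (s : Finset ι) (h : ι → Fin N → ℝ) (co : ι → ℝ) (r : Fin N → ℝ),
      (∀ j ∈ s, IsEdgeRow (h j)) →
      LinearIndependent ℝ (fun j : {j // j ∈ s} => h j) →
      (r = 0 ∨ IsEdgeRow r) →
      ((∑ j ∈ s, co j • h j) = r) →
      ∀ j ∈ s, co j = 0 ∨ co j = 1 ∨ co j = -1 := by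
  intro s
  induction s using Finset.strongInduction with
  | _ s IH =>
    intro h co r hrows hli hr hsum j hj
    have hsne : s.Nonempty := ⟨j, hj⟩
    -- the set of touched vertices
    set T : Finset (Fin N) := Finset.univ.filter (fun v => ∃ i ∈ s, h i v ≠ 0) with hT
    -- every touched vertex has degree ≥ 1; total degree = 2|s|
    have hdegsum : ∑ v ∈ T, (s.filter fun i => h i v ≠ 0).card = 2 * s.card := by
      have hzero : ∀ v ∈ Finset.univ, v ∉ T → (s.filter fun i => h i v ≠ 0).card = 0 := by
        intro v _ hv
        rw [Finset.card_eq_zero, Finset.filter_eq_empty_iff]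
        intro i hi h0
        exact hv (by
          simp only [hT, Finset.mem_filter, Finset.mem_univ, true_and]
          exact ⟨i, hi, h0⟩)
      rw [Finset.sum_subset (Finset.subset_univ T) hzero]
      simp_rw [Finset.card_filter]
      rw [Finset.sum_comm]
      have h2 : ∀ i ∈ s, (∑ v : Fin N, if h i v ≠ 0 then 1 else 0) = 2 := by
        intro i hi
        rw [← Finset.card_filter]
        exact (hrows i hi).support_card
      rw [Finset.sum_congr rfl h2, Finset.sum_const, smul_eq_mul]
      ring
    -- independence forces |s| < |T|
    have hcard : s.card < T.card := by
      by_contra hlt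
      push_neg at hlt
      -- pick a vertex in T
      obtain ⟨j0, hj0⟩ := hsne
      obtain ⟨a, b, hab, ha, hb, h0⟩ := hrows j0 hj0
      have haT : a ∈ T := by
        simp only [hT, Finset.mem_filter, Finset.mem_univ, true_and]
        exact ⟨j0, hj0, by rw [ha]; norm_num⟩
      -- restriction map to T.erase a
      let Φ : (Fin N → ℝ) →ₗ[ℝ] ({v // v ∈ T.erase a} → ℝ) :=
        LinearMap.funLeft ℝ ℝ (fun v => (v : Fin N))
      have hli2 : LinearIndependent ℝ (fun i : {i // i ∈ s} => Φ (h i)) := by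
        rw [Fintype.linearIndependent_iff]
        intro g hg
        have hsum0 : (∑ i : {i // i ∈ s}, g i • h (i : ι)) = 0 := by
          set F := ∑ i : {i // i ∈ s}, g i • h (i : ι) with hF
          have hFT : ∀ v, v ∉ T → F v = 0 := by
            intro v hv
            simp only [hT, Finset.mem_filter, Finset.mem_univ, true_and, not_exists] at hv
            push_neg at hv
            simp only [hF, Finset.sum_apply, Pi.smul_apply, smul_eq_mul]
            refine Finset.sum_eq_zero fun i _ => ?_
            rw [hv i i.2]; ring
          have hFe : ∀ v, v ∈ T.erase a → F v = 0 := by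
            intro v hv
            have := congrFun hg ⟨v, hv⟩
            simpa [Φ, LinearMap.funLeft, hF] using this
          have hFs : ∑ v, F v = 0 := by
            simp only [hF, Finset.sum_apply, Pi.smul_apply, smul_eq_mul]
            rw [Finset.sum_comm]
            refine Finset.sum_eq_zero fun i _ => ?_
            rw [← Finset.mul_sum, (hrows i i.2).sum_eq_zero]; ring
          have hFa : F a = 0 := by
            have : ∑ v, F v = F a + ∑ v ∈ Finset.univ.erase a, F v := by
              rw [Finset.add_sum_erase _ _ (Finset.mem_univ a)]
            have h2 : ∑ v ∈ Finset.univ.erase a, F v = 0 := by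
              refine Finset.sum_eq_zero fun v hv => ?_
              by_cases hvT : v ∈ T
              · exact hFe v (Finset.mem_erase.mpr ⟨(Finset.mem_erase.mp hv).1, hvT⟩)
              · exact hFT v hvT
            rw [hFs, h2, add_zero] at this; exact this.symm
          funext v
          by_cases hvT : v ∈ T
          · by_cases hva : v = a
            · subst hva; exact hFa
            · exact hFe v (Finset.mem_erase.mpr ⟨hva, hvT⟩)
          · exact hFT v hvT
        exact Fintype.linearIndependent_iff.mp hli g hsum0
      have hc1 := hli2.fintype_card_le_finrank
      rw [Module.finrank_fintype_fun_eq_card, Fintype.card_coe, Fintype.card_coe,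
        Finset.card_erase_of_mem haT] at hc1
      have hTpos : 0 < T.card := Finset.card_pos.mpr ⟨a, haT⟩
      omega
    -- find a leaf vertex: some v with exactly one incident edge
    have hleaf : ∃ v, (s.filter fun i => h i v ≠ 0).card = 1 := by
      by_contra hno
      push_neg at hno
      have : ∀ v ∈ T, 2 ≤ (s.filter fun i => h i v ≠ 0).card := by
        intro v hv
        have h1 : 1 ≤ (s.filter fun i => h i v ≠ 0).card := by
          simp only [hT, Finset.mem_filter, Finset.mem_univ, true_and] at hv
          obtain ⟨i, hi, hiv⟩ := hv
          exact Finset.card_pos.mpr ⟨i, Finset.mem_filter.mpr ⟨hi, hiv⟩⟩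
        have := hno v
        omega
      have := Finset.sum_le_sum this
      rw [hdegsum, Finset.sum_const, smul_eq_mul] at this
      omega
    obtain ⟨v, hv1⟩ := hleaf
    obtain ⟨j0, hj0eq⟩ := Finset.card_eq_one.mp hv1
    have hj0s : j0 ∈ s ∧ h j0 v ≠ 0 := by
      have : j0 ∈ s.filter fun i => h i v ≠ 0 := hj0eq ▸ Finset.mem_singleton_self j0
      exact Finset.mem_filter.mp this
    -- evaluating at the leaf
    have heval : co j0 * h j0 v = r v := by
      have := congrFun hsum v
      simp only [Finset.sum_apply, Pi.smul_apply, smul_eq_mul] at this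
      rw [← Finset.sum_filter_of_ne (p := fun i => h i v ≠ 0)
        (fun i _ hne => by intro hz; exact hne (by rw [hz]; ring))] at this
      rwa [hj0eq, Finset.sum_singleton] at this
    have hhv : h j0 v = 1 ∨ h j0 v = -1 := by
      rcases (hrows j0 hj0s.1).values v with h' | h' | h'
      · exact absurd h' hj0s.2
      · exact Or.inl h'
      · exact Or.inr h'
    have hrv : r v = 0 ∨ r v = 1 ∨ r v = -1 := by
      rcases hr with rfl | hr
      · exact Or.inl rfl
      · exact hr.values v
    have hco : co j0 = r v * h j0 v := by
      rcases hhv with h' | h' <;> rw [h'] at heval ⊢ <;> linarith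
    have hcoj0 : co j0 = 0 ∨ co j0 = 1 ∨ co j0 = -1 := by
      rcases hrv with h2 | h2 | h2 <;> rcases hhv with h' | h' <;>
        rw [hco, h2, h'] <;> norm_num
    -- the residual combination over s.erase j0
    have hsum' : (∑ i ∈ s.erase j0, co i • h i) = r - co j0 • h j0 := by
      have := Finset.add_sum_erase s (fun i => co i • h i) hj0s.1
      rw [hsum] at this
      rw [eq_sub_iff_add_eq, ← this, add_comm]
    have hr' : r - co j0 • h j0 = 0 ∨ IsEdgeRow (r - co j0 • h j0) := by
      by_cases hz : co j0 = 0
      · rw [hz, zero_smul, sub_zero]; exact hr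
      · have hco1 : co j0 = 1 ∨ co j0 = -1 := by
          rcases hcoj0 with h' | h' | h' ; exact absurd h' hz; exact Or.inl h'; exact Or.inr h'
        have hrv0 : r v ≠ 0 := by
          intro h'
          rw [h'] at heval
          rcases hhv with h2 | h2 <;> rw [h2] at heval <;>
            [exact hz (by linarith); exact hz (by linarith)]
        have hrer : IsEdgeRow r := by
          rcases hr with rfl | hr
          · exact absurd rfl hrv0
          · exact hr
        exact hrer.sub ((hrows j0 hj0s.1).smul hco1) (v := v)
          (by simp only [Pi.smul_apply, smul_eq_mul]; exact heval.symm) hrv0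
    by_cases hjj0 : j = j0
    · subst hjj0; exact hcoj0
    · refine IH (s.erase j0) (Finset.erase_ssubset hj0s.1) h co _
        (fun i hi => hrows i (Finset.mem_of_mem_erase hi))
        (hli.comp (fun i : {i // i ∈ s.erase j0} => (⟨i.1, Finset.mem_of_mem_erase i.2⟩ : {i // i ∈ s}))
          (fun x y hxy => Subtype.ext (Subtype.mk_eq_mk.mp hxy)))
        hr' hsum' j (Finset.mem_erase.mpr ⟨hjj0, hj⟩)

end Key

/-- For a connected graph `G` on `n` vertices with spanning tree `G̃` whose
fundamental cycles `O₁,…,O_c` are pairwise edge-disjoint, with cycle incidence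
matrix `Q`, one has
`κ(G,G̃) = Tr((I_{n-1}+QᵀQ)⁻¹) = (n-1) - c + Σ_k |O_k|⁻¹`, equivalently
`κ(G,G̃)/(n-1) = 1 - (c/(n-1))(1 - c⁻¹ Σ_k |O_k|⁻¹)`. -/
theorem kappa_disjoint_cycles {n c : ℕ} (hn : 2 ≤ n) (hc : 0 < c)
    (Ht : Matrix (Fin (n - 1)) (Fin n) ℝ)
    (B : Matrix (Fin c) (Fin n) ℝ)
    (Q : Matrix (Fin c) (Fin (n - 1)) ℝ)
    (hHtRows : ∀ i, IsEdgeRow (Ht i))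
    (hBRows : ∀ k, IsEdgeRow (B k))
    (hrank : Ht.rank = n - 1)
    (hQ : B = (-Q) * Ht)
    (hdisj : ∀ k l : Fin c, k ≠ l → ∀ j, ¬(Q k j ≠ 0 ∧ Q l j ≠ 0)) :
    letI cycLen : Fin c → ℕ :=
      fun k => (Finset.univ.filter fun j => Q k j ≠ 0).card + 1
    letI κ : ℝ := (((1 : Matrix (Fin (n-1)) (Fin (n-1)) ℝ) + Qᵀ * Q)⁻¹).trace
    κ = ((n : ℝ) - 1) - c + ∑ k, ((cycLen k : ℝ))⁻¹ ∧
    κ / ((n : ℝ) - 1) =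
      1 - ((c : ℝ) / ((n : ℝ) - 1)) * (1 - (c : ℝ)⁻¹ * ∑ k, ((cycLen k : ℝ))⁻¹) := by
  beta_reduce
  -- rows of Ht are linearly independent
  have hliHt : LinearIndependent ℝ Ht := by
    apply linearIndependent_iff_card_eq_finrank_span.mpr
    rw [Fintype.card_fin]
    show n - 1 = Module.finrank ℝ (Submodule.span ℝ (Set.range Ht.row))
    rw [← Matrix.rank_eq_finrank_span_row, hrank]
  -- entries of Q lie in {0, 1, -1}
  have hQvals : ∀ k j, Q k j = 0 ∨ Q k j = 1 ∨ Q k j = -1 := by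
    intro k j
    have happ : (∑ i ∈ Finset.univ, (fun i => - Q k i) i • Ht i) = B k := by
      funext v
      rw [hQ]
      simp [Matrix.mul_apply, Matrix.neg_apply]
    have hres := key_edge_coeffs Finset.univ Ht (fun i => - Q k i) (B k)
      (fun i _ => hHtRows i)
      (hliHt.comp Subtype.val Subtype.val_injective)
      (Or.inr (hBRows k)) happ j (Finset.mem_univ j)
    simp only [neg_eq_zero] at hres
    rcases hres with h | h | h
    · exact Or.inl h
    · exact Or.inr (Or.inr (by linarith))
    · exact Or.inr (Or.inl (by linarith))
  set sQ : Fin c → ℕ := fun k => (Finset.univ.filter fun j => Q k j ≠ 0).card with hsQ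
  have hgs : ∑ k : Fin c, ((((Finset.univ.filter fun j => Q k j ≠ 0).card + 1 : ℕ) : ℝ))⁻¹
      = ∑ k : Fin c, ((sQ k : ℝ) + 1)⁻¹ := by
    refine Finset.sum_congr rfl fun k _ => ?_
    simp only [hsQ]
    push_cast
    ring
  -- Q * Qᵀ is diagonal with entries sQ
  have hQQt : Q * Qᵀ = Matrix.diagonal (fun k => (sQ k : ℝ)) := by
    ext k l
    rw [Matrix.mul_apply, Matrix.diagonal_apply]
    by_cases hkl : k = l
    · subst hkl
      rw [if_pos rfl]
      have hterm : ∀ j, Q k j * Qᵀ j k = if Q k j ≠ 0 then (1 : ℝ) else 0 := by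
        intro j
        rw [Matrix.transpose_apply]
        rcases hQvals k j with h | h | h <;> simp [h]
      rw [Finset.sum_congr rfl (fun j _ => hterm j), Finset.sum_boole, hsQ]
    · rw [if_neg hkl]
      refine Finset.sum_eq_zero fun j _ => ?_
      rw [Matrix.transpose_apply]
      have := hdisj k l hkl j
      by_cases h1 : Q k j = 0
      · rw [h1]; ring
      · have h2 : Q l j = 0 := by
          by_contra h2
          exact this ⟨h1, h2⟩
        rw [h2]; ring
  -- diagonal matrices D and E
  set D : Matrix (Fin c) (Fin c) ℝ := Matrix.diagonal (fun k => (1 : ℝ) + sQ k) with hD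
  set E : Matrix (Fin c) (Fin c) ℝ := Matrix.diagonal (fun k => ((1 : ℝ) + sQ k)⁻¹) with hE
  have hpos : ∀ k : Fin c, (1 : ℝ) + sQ k ≠ 0 := fun k => by positivity
  have hDE : D * E = 1 := by
    rw [hD, hE, Matrix.diagonal_mul_diagonal, ← Matrix.diagonal_one]
    congr 1
    funext k
    field_simp
  have key1 : Q * Qᵀ = D - 1 := by
    rw [hQQt, hD, ← Matrix.diagonal_one, Matrix.diagonal_sub]
    congr 1
    funext k
    ring
  have hMN : ((1 : Matrix (Fin (n-1)) (Fin (n-1)) ℝ) + Qᵀ * Q) * (1 - Qᵀ * E * Q) = 1 := by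
    have assoc1 : Qᵀ * Q * (Qᵀ * E * Q) = Qᵀ * (Q * Qᵀ) * E * Q := by
      simp only [Matrix.mul_assoc]
    have expand : ((1 : Matrix (Fin (n-1)) (Fin (n-1)) ℝ) + Qᵀ * Q) * (1 - Qᵀ * E * Q)
        = 1 + Qᵀ * Q - Qᵀ * E * Q - Qᵀ * Q * (Qᵀ * E * Q) := by
      rw [Matrix.mul_sub, Matrix.add_mul, Matrix.add_mul, Matrix.mul_one, Matrix.mul_one,
        Matrix.one_mul]
      abel
    rw [expand, assoc1, key1, Matrix.mul_sub Qᵀ D 1, Matrix.mul_one, Matrix.sub_mul,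
      Matrix.sub_mul, Matrix.mul_assoc Qᵀ D E, hDE, Matrix.mul_one]
    abel
  have hinv : ((1 : Matrix (Fin (n-1)) (Fin (n-1)) ℝ) + Qᵀ * Q)⁻¹ = 1 - Qᵀ * E * Q :=
    Matrix.inv_eq_right_inv hMN
  have hκ : (((1 : Matrix (Fin (n-1)) (Fin (n-1)) ℝ) + Qᵀ * Q)⁻¹).trace
      = (↑(n - 1) : ℝ) - ∑ k, ((1 : ℝ) + sQ k)⁻¹ * sQ k := by
    rw [hinv, Matrix.trace_sub, Matrix.trace_one, Fintype.card_fin,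
      Matrix.mul_assoc, Matrix.trace_mul_comm, Matrix.mul_assoc, ← Matrix.mul_assoc E Q Qᵀ,
      Matrix.mul_assoc E Q Qᵀ, hQQt, hE, Matrix.diagonal_mul_diagonal, Matrix.trace_diagonal]
  have hterm : ∀ k : Fin c, ((1 : ℝ) + sQ k)⁻¹ * sQ k = 1 - ((sQ k : ℝ) + 1)⁻¹ := by
    intro k
    rw [add_comm ((sQ k : ℝ)) (1 : ℝ)]
    linear_combination inv_mul_cancel₀ (hpos k)
  have hsum1 : ∑ k, ((1 : ℝ) + sQ k)⁻¹ * sQ k = (c : ℝ) - ∑ k, ((sQ k : ℝ) + 1)⁻¹ := by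
    rw [Finset.sum_congr rfl (fun k _ => hterm k), Finset.sum_sub_distrib,
      Finset.sum_const, Finset.card_univ, Fintype.card_fin, nsmul_eq_mul, mul_one]
  have hn1 : (↑(n - 1) : ℝ) = (n : ℝ) - 1 := by
    rw [Nat.cast_sub (by omega), Nat.cast_one]
  have conj1 : (((1 : Matrix (Fin (n-1)) (Fin (n-1)) ℝ) + Qᵀ * Q)⁻¹).trace
      = ((n : ℝ) - 1) - c + ∑ k, ((sQ k : ℝ) + 1)⁻¹ := by
    rw [hκ, hsum1, hn1]; ring
  have hne : (n : ℝ) - 1 ≠ 0 := by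
    have h2 : (2 : ℝ) ≤ n := by exact_mod_cast hn
    linarith
  have hcne : (c : ℝ) ≠ 0 := Nat.cast_ne_zero.mpr hc.ne'
  constructor
  · rw [hgs, conj1]
  · rw [hgs, conj1]
    field_simp
    ring
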